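/- Let D ⊆ ℝ² be a domain and let Ω_D = {(x,y,z) ∈ ℝ³ : |z| < 1, z²(x²+y²) < 1, and (x,y) ∈ D if z = 0}. Then every nonconstant conformal harmonic map f = (f₁, f₂, f₃) : ℂ → ℝ³ with f(ℂ) ⊆ Ω_D satisfies f₃ ≡ 0 and f(ℂ) ⊆ D × {0}. -/

import Mathlib

open intervalIntegral Metric MeasureTheory in

lemma exists_primitive (φ : ℂ → ℂ) (hφ : Differentiable ℂ φ) :
    ∃ g : ℂ → ℂ, ∀ z, HasDerivAt g (φ z) z := by
  have hφ' : Differentiable ℂ (deriv φ) := by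
    have h0 : AnalyticOnNhd ℂ φ Set.univ := fun z _ => hφ.analyticAt z
    exact fun z => (h0.deriv z trivial).differentiableAt
  have hc : Continuous φ := hφ.continuous
  have hc' : Continuous (deriv φ) := hφ'.continuous
  set F' : ℂ → ℝ → ℂ := fun x t => φ (↑t * x) + x * (deriv φ (↑t * x) * ↑t) with hF'
  refine ⟨fun z => ∫ t in (0:ℝ)..1, z * φ (↑t * z), fun z₀ => ?_⟩
  -- bounds
  set R : ℝ := ‖z₀‖ + 1 with hR
  obtain ⟨M₁, hM₁⟩ := (isCompact_closedBall (0:ℂ) R).exists_bound_of_continuousOn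
    hc.continuousOn
  obtain ⟨M₂, hM₂⟩ := (isCompact_closedBall (0:ℂ) R).exists_bound_of_continuousOn
    hc'.continuousOn
  have hmem : ∀ t ∈ Set.uIoc (0:ℝ) 1, ∀ x ∈ ball z₀ 1, (↑t * x) ∈ closedBall (0:ℂ) R := by
    intro t ht x hx
    rw [Set.uIoc_of_le zero_le_one] at ht
    have hxn : ‖x‖ ≤ R := by
      have := mem_ball_iff_norm.mp hx
      have := norm_sub_norm_le x z₀
      simp only [hR]; linarith
    have : ‖(↑t * x : ℂ)‖ = |t| * ‖x‖ := by
      rw [norm_mul, Complex.norm_real, Real.norm_eq_abs]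
    rw [mem_closedBall_zero_iff, this]
    have h1 : |t| ≤ 1 := abs_le.mpr ⟨by linarith [ht.1], ht.2⟩
    nlinarith [norm_nonneg x, abs_nonneg t]
  have key := hasDerivAt_integral_of_dominated_loc_of_deriv_le
    (F := fun x t => x * φ (↑t * x)) (F' := F') (x₀ := z₀) (a := 0) (b := 1)
    (μ := volume) (bound := fun _ => M₁ + R * M₂) (s := ball z₀ 1)
    (ball_mem_nhds z₀ one_pos)
    (Filter.Eventually.of_forall fun x =>
      ((continuous_const.mul (hc.comp ((Complex.continuous_ofReal).mul
        continuous_const))).aestronglyMeasurable))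
    ((continuous_const.mul (hc.comp ((Complex.continuous_ofReal).mul
        continuous_const))).intervalIntegrable _ _)
    ((hc.comp ((Complex.continuous_ofReal).mul continuous_const)).add
      (continuous_const.mul ((hc'.comp ((Complex.continuous_ofReal).mul
        continuous_const)).mul Complex.continuous_ofReal))).aestronglyMeasurable
    (Filter.Eventually.of_forall fun t ht x hx => ?_)
    (intervalIntegrable_const)
    (Filter.Eventually.of_forall fun t ht x hx => ?_)
  · -- conclude
    obtain ⟨-, hder⟩ := key
    have hFTC : ∀ t ∈ Set.uIcc (0:ℝ) 1,
        HasDerivAt (fun s : ℝ => (↑s : ℂ) * φ (↑s * z₀)) (F' z₀ t) t := by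
      intro t _
      have h1 : HasDerivAt (fun w : ℂ => w * φ (w * z₀))
          (1 * φ (↑t * z₀) + ↑t * (deriv φ (↑t * z₀) * z₀)) (↑t : ℂ) := by
        have hin : HasDerivAt (fun w : ℂ => w * z₀) z₀ (↑t : ℂ) := by
          simpa using (hasDerivAt_id (↑t : ℂ)).mul_const z₀
        have hcomp : HasDerivAt (fun w : ℂ => φ (w * z₀)) (deriv φ (↑t * z₀) * z₀) (↑t : ℂ) :=
          HasDerivAt.comp _ (hφ _).hasDerivAt hin
        exact (hasDerivAt_id (↑t:ℂ)).mul hcomp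
      have h2 := h1.comp_ofReal
      have : F' z₀ t = 1 * φ (↑t * z₀) + ↑t * (deriv φ (↑t * z₀) * z₀) := by
        simp only [hF']; ring
      rw [this]
      exact h2
    have hint : IntervalIntegrable (F' z₀) volume 0 1 :=
      ((hc.comp ((Complex.continuous_ofReal).mul continuous_const)).add
        (continuous_const.mul ((hc'.comp ((Complex.continuous_ofReal).mul
          continuous_const)).mul Complex.continuous_ofReal))).intervalIntegrable _ _
    have := intervalIntegral.integral_eq_sub_of_hasDerivAt hFTC hint
    rw [this] at hder
    simpa using hder
  · -- bound
    have h1 := hM₁ _ (hmem t ht x hx)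
    have h2 := hM₂ _ (hmem t ht x hx)
    rw [Set.uIoc_of_le zero_le_one] at ht
    have hxn : ‖x‖ ≤ R := by
      have := mem_ball_iff_norm.mp hx
      have := norm_sub_norm_le x z₀
      simp only [hR]; linarith
    have htn : ‖(↑t : ℂ)‖ ≤ 1 := by
      rw [Complex.norm_real, Real.norm_eq_abs]
      exact abs_le.mpr ⟨by linarith [ht.1], ht.2⟩
    calc ‖F' x t‖ ≤ ‖φ (↑t * x)‖ + ‖x‖ * (‖deriv φ (↑t * x)‖ * ‖(↑t:ℂ)‖) := by
          simp only [hF']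
          refine (norm_add_le _ _).trans ?_
          gcongr
          rw [norm_mul, norm_mul]
      _ ≤ M₁ + R * M₂ := by
          have hM₂0 : 0 ≤ M₂ := le_trans (norm_nonneg _) h2
          have hd := norm_nonneg (deriv φ (↑t * x))
          have hx0 := norm_nonneg x
          have ht0 := norm_nonneg ((↑t:ℂ))
          have e1 : ‖deriv φ (↑t * x)‖ * ‖(↑t:ℂ)‖ ≤ M₂ := by nlinarith
          have hR0 : (0:ℝ) ≤ R := by rw [hR]; positivity
          have e2 : ‖x‖ * (‖deriv φ (↑t * x)‖ * ‖(↑t:ℂ)‖) ≤ R * M₂ :=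
            mul_le_mul hxn e1 (by positivity) hR0
          linarith
  · -- differentiability in x
    have hin : HasDerivAt (fun y : ℂ => ↑t * y) (↑t : ℂ) x := by
      simpa using (hasDerivAt_id x).const_mul (↑t : ℂ)
    have hcomp : HasDerivAt (fun y : ℂ => φ (↑t * y)) (deriv φ (↑t * x) * ↑t) x :=
      HasDerivAt.comp _ (hφ _).hasDerivAt hin
    have := (hasDerivAt_id' x).mul hcomp
    rw [show F' x t = 1 * φ (↑t * x) + x * (deriv φ (↑t * x) * ↑t) by simp only [hF']; ring]
    exact this


-- basis lemma
lemma clm_eq_zero_of_basis {F : Type*} [NormedAddCommGroup F] [NormedSpace ℝ F]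
    (L : ℂ →L[ℝ] F) (h1 : L 1 = 0) (hI : L Complex.I = 0) : L = 0 := by
  ext z
  have hz : z = z.re • (1:ℂ) + z.im • Complex.I := by
    simp [Complex.real_smul, Complex.re_add_im]
  rw [hz, map_add, map_smul, map_smul, h1, hI]
  simp


lemma const_of_bounded_harmonic (u : ℂ → ℝ) (hu : ContDiff ℝ 2 u)
    (hharm : ∀ z, fderiv ℝ (fun w => fderiv ℝ u w 1) z 1
      + fderiv ℝ (fun w => fderiv ℝ u w Complex.I) z Complex.I = 0)
    (C : ℝ) (hb : ∀ z, |u z| ≤ C) : ∀ z w, u z = u w := by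
  have hdu : Differentiable ℝ u := hu.differentiable two_ne_zero
  have hdu1 : ContDiff ℝ 1 (fderiv ℝ u) := hu.fderiv_right (by norm_num)
  have hDdiff : Differentiable ℝ (fderiv ℝ u) := hdu1.differentiable one_ne_zero
  set D : ℂ → ℂ →L[ℝ] ℂ →L[ℝ] ℝ := fun z => fderiv ℝ (fderiv ℝ u) z with hD
  have hDz : ∀ z, HasFDerivAt (fderiv ℝ u) (D z) z := fun z => (hDdiff z).hasFDerivAt
  have hsymm : ∀ z v w, D z v w = D z w v := fun z =>
    second_derivative_symmetric (fun y => (hdu y).hasFDerivAt) (hDz z)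
  have happly : ∀ (v : ℂ) (z : ℂ), HasFDerivAt (fun w => fderiv ℝ u w v)
      ((ContinuousLinearMap.apply ℝ ℝ v).comp (D z)) z := fun v z =>
    (ContinuousLinearMap.apply ℝ ℝ v).hasFDerivAt.comp z (hDz z)
  have hh : ∀ z, D z 1 1 + D z Complex.I Complex.I = 0 := by
    intro z
    have h := hharm z
    rw [(happly 1 z).fderiv, (happly Complex.I z).fderiv] at h
    simpa using h
  -- the holomorphic function φ = u_x - i u_y
  set φ : ℂ → ℂ := fun z => (fderiv ℝ u z 1 : ℂ) - (fderiv ℝ u z Complex.I : ℂ) * Complex.I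
    with hφdef
  have hL : ∀ z, HasFDerivAt φ
      (Complex.ofRealCLM.comp ((ContinuousLinearMap.apply ℝ ℝ 1).comp (D z))
        - Complex.I • (Complex.ofRealCLM.comp ((ContinuousLinearMap.apply ℝ ℝ Complex.I).comp
            (D z)))) z := by
    intro z
    have h1 : HasFDerivAt (fun w => ((fderiv ℝ u w 1 : ℝ) : ℂ))
        (Complex.ofRealCLM.comp ((ContinuousLinearMap.apply ℝ ℝ 1).comp (D z))) z :=
      Complex.ofRealCLM.hasFDerivAt.comp z (happly 1 z)
    have h2 : HasFDerivAt (fun w => ((fderiv ℝ u w Complex.I : ℝ) : ℂ))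
        (Complex.ofRealCLM.comp ((ContinuousLinearMap.apply ℝ ℝ Complex.I).comp (D z))) z :=
      Complex.ofRealCLM.hasFDerivAt.comp z (happly Complex.I z)
    exact h1.sub (h2.mul_const Complex.I)
  have hφdiff : Differentiable ℂ φ := by
    intro z
    set L := Complex.ofRealCLM.comp ((ContinuousLinearMap.apply ℝ ℝ 1).comp (D z))
        - Complex.I • (Complex.ofRealCLM.comp ((ContinuousLinearMap.apply ℝ ℝ Complex.I).comp
            (D z))) with hLdef
    have hLval : ∀ w, L w = ((D z w 1 : ℝ) : ℂ) - Complex.I * ((D z w Complex.I : ℝ) : ℂ) := by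
      intro w
      simp [hLdef, smul_eq_mul]
    have hrs : ((1 : ℂ →L[ℂ] ℂ).smulRight (L 1)).restrictScalars ℝ = L := by
      ext w
      have hw : w = w.re • (1:ℂ) + w.im • Complex.I := by
        simp [Complex.real_smul, Complex.re_add_im]
      have hLI : L Complex.I = Complex.I * L 1 := by
        rw [hLval, hLval]
        rw [hsymm z Complex.I 1]
        have hDII : D z Complex.I Complex.I = -(D z 1 1) := by
          have := hh z; linarith
        rw [hDII]
        push_cast
        ring_nf
        rw [Complex.I_sq]
        ring
      calc ((1 : ℂ →L[ℂ] ℂ).smulRight (L 1)).restrictScalars ℝ w = w * L 1 := by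
            simp [ContinuousLinearMap.smulRight_apply, smul_eq_mul]
        _ = (↑w.re + ↑w.im * Complex.I) * L 1 := by rw [Complex.re_add_im]
        _ = w.re • L 1 + w.im • L Complex.I := by
            rw [hLI]; simp only [Complex.real_smul]; ring
        _ = L (w.re • (1:ℂ) + w.im • Complex.I) := by rw [map_add, map_smul, map_smul]
        _ = L w := by rw [← hw]
    exact (hasFDerivAt_of_restrictScalars ℝ (hL z) hrs).differentiableAt
  obtain ⟨g, hg⟩ := exists_primitive φ hφdiff
  -- Re g - u is constant
  have hgR : ∀ z, HasFDerivAt (fun w => (g w).re - u w)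
      (Complex.reCLM.comp ((((1 : ℂ →L[ℂ] ℂ).smulRight (φ z)).restrictScalars ℝ))
        - fderiv ℝ u z) z := fun z =>
    ((Complex.reCLM.hasFDerivAt.comp z ((hg z).hasFDerivAt.restrictScalars ℝ))).sub
      (hdu z).hasFDerivAt
  have hK0 : ∀ z, (Complex.reCLM.comp ((((1 : ℂ →L[ℂ] ℂ).smulRight (φ z)).restrictScalars ℝ))
      - fderiv ℝ u z) = 0 := by
    intro z
    apply clm_eq_zero_of_basis
    · simp [hφdef, ContinuousLinearMap.smulRight_apply, Complex.mul_re]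
    · simp [hφdef, ContinuousLinearMap.smulRight_apply, Complex.mul_re, Complex.mul_im]
  have hconst : ∀ z, (g z).re - u z = (g 0).re - u 0 := by
    intro z
    apply is_const_of_fderiv_eq_zero (𝕜 := ℝ)
      (fun w => ((hgR w).differentiableAt))
      (fun w => by rw [(hgR w).fderiv, hK0 w])
  -- exp ∘ g is bounded entire
  set E : ℂ → ℂ := fun z => Complex.exp (g z) with hE
  have hEdiff : Differentiable ℂ E := fun z => ((hg z).differentiableAt).cexp
  have hEbdd : Bornology.IsBounded (Set.range E) := by
    rw [Metric.isBounded_iff_subset_closedBall 0]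
    refine ⟨Real.exp (C + ((g 0).re - u 0)), ?_⟩
    rintro - ⟨z, rfl⟩
    rw [mem_closedBall_zero_iff]
    have : ‖E z‖ = Real.exp ((g z).re) := Complex.norm_exp (g z)
    rw [this]
    apply Real.exp_le_exp.mpr
    have h1 := hconst z
    have h2 := (abs_le.mp (hb z)).2
    linarith
  have hEc : ∀ z w, E z = E w := fun z w => hEdiff.apply_eq_apply_of_bounded hEbdd z w
  -- φ ≡ 0
  have hφ0 : ∀ z, φ z = 0 := by
    intro z
    have h1 : HasDerivAt E (Complex.exp (g z) * φ z) z := (hg z).cexp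
    have h2 : HasDerivAt E 0 z := by
      have hfun : E = fun _ => E 0 := funext fun w => hEc w 0
      rw [hfun]
      exact hasDerivAt_const z (E 0)
    have := h1.unique h2
    rcases mul_eq_zero.mp this with h | h
    · exact absurd h (Complex.exp_ne_zero _)
    · exact h
  -- partial derivatives vanish
  have hfz : ∀ z, fderiv ℝ u z = 0 := by
    intro z
    apply clm_eq_zero_of_basis
    · have := congrArg Complex.re (hφ0 z)
      simpa [hφdef, Complex.mul_re] using this
    · have := congrArg Complex.im (hφ0 z)
      simpa [hφdef, Complex.mul_im] using this
  intro z w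
  exact is_const_of_fderiv_eq_zero hdu hfz z w

lemma component_harmonic (f : ℂ → EuclideanSpace ℝ (Fin 3)) (hC2 : ContDiff ℝ 2 f)
    (hharm : ∀ z : ℂ, fderiv ℝ (fun w => fderiv ℝ f w 1) z 1
      + fderiv ℝ (fun w => fderiv ℝ f w Complex.I) z Complex.I = 0) (j : Fin 3) :
    ∀ z : ℂ, fderiv ℝ (fun w => fderiv ℝ (fun y => f y j) w 1) z 1
      + fderiv ℝ (fun w => fderiv ℝ (fun y => f y j) w Complex.I) z Complex.I = 0 := by
  intro z
  have hdf : Differentiable ℝ f := hC2.differentiable two_ne_zero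
  have hdF : Differentiable ℝ (fderiv ℝ f) :=
    (hC2.fderiv_right (m := 1) (by norm_num)).differentiable one_ne_zero
  have h1 : ∀ v : ℂ, (fun w => fderiv ℝ (fun y => f y j) w v)
      = fun w => (EuclideanSpace.proj j) ((fderiv ℝ f w) v) := by
    intro v; funext w
    have h : HasFDerivAt (fun y => f y j)
        ((EuclideanSpace.proj j).comp (fderiv ℝ f w)) w :=
      (EuclideanSpace.proj (𝕜 := ℝ) j).hasFDerivAt.comp w (hdf w).hasFDerivAt
    rw [h.fderiv]; rfl
  have key : ∀ v v' : ℂ, fderiv ℝ (fun w => fderiv ℝ (fun y => f y j) w v) z v'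
      = EuclideanSpace.proj j (fderiv ℝ (fun w => fderiv ℝ f w v) z v') := by
    intro v v'
    rw [h1 v]
    have hd : DifferentiableAt ℝ (fun w => (fderiv ℝ f w) v) z :=
      (hdF z).clm_apply (differentiableAt_const v)
    have h2 : HasFDerivAt (fun w => (EuclideanSpace.proj j) ((fderiv ℝ f w) v))
        ((EuclideanSpace.proj (𝕜 := ℝ) j).comp
          (fderiv ℝ (fun w => (fderiv ℝ f w) v) z)) z :=
      (EuclideanSpace.proj (𝕜 := ℝ) j).hasFDerivAt.comp z hd.hasFDerivAt
    rw [h2.fderiv]; rfl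
  rw [key 1 1, key Complex.I Complex.I, ← map_add, hharm z, map_zero]



open RealInnerProductSpace

/-- A map `f : ℂ → ℝⁿ` is conformal harmonic if it is `C²`, its partial derivatives
`f_x = Df·1` and `f_y = Df·i` satisfy `f_x · f_y = 0` and `|f_x| = |f_y|` at every
point (conformality), and `f_xx + f_yy = 0` (harmonicity). -/
def ConformalHarmonic {n : ℕ} (f : ℂ → EuclideanSpace ℝ (Fin n)) : Prop :=
  ContDiff ℝ 2 f ∧
  (∀ z : ℂ, ⟪fderiv ℝ f z 1, fderiv ℝ f z Complex.I⟫ = 0 ∧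
      ‖fderiv ℝ f z 1‖ = ‖fderiv ℝ f z Complex.I‖) ∧
  (∀ z : ℂ, fderiv ℝ (fun w => fderiv ℝ f w 1) z 1
      + fderiv ℝ (fun w => fderiv ℝ f w Complex.I) z Complex.I = 0)

/-- The domain `Ω_D = {(x,y,z) ∈ ℝ³ : |z| < 1, z²(x²+y²) < 1, (x,y) ∈ D if z = 0}`
associated with a planar domain `D ⊆ ℝ²`. -/
def OmegaD (D : Set (ℝ × ℝ)) : Set (EuclideanSpace ℝ (Fin 3)) :=
  {p | |p 2| < 1 ∧ (p 2) ^ 2 * ((p 0) ^ 2 + (p 1) ^ 2) < 1 ∧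
      (p 2 = 0 → (p 0, p 1) ∈ D)}

/-- Let `D ⊆ ℝ²` be a domain. Every nonconstant conformal harmonic
map `f = (f₁,f₂,f₃) : ℂ → ℝ³` with image in `Ω_D` satisfies `f₃ ≡ 0` and
`f(ℂ) ⊆ D × {0}`. -/
theorem conformalHarmonic_into_OmegaD_lies_in_D
    (D : Set (ℝ × ℝ)) (hDne : D.Nonempty) (hDopen : IsOpen D)
    (hDconn : IsConnected D)
    (f : ℂ → EuclideanSpace ℝ (Fin 3)) (hf : ConformalHarmonic f)
    (hrange : ∀ z : ℂ, f z ∈ OmegaD D)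
    (hnc : ∃ z w : ℂ, f z ≠ f w) :
    (∀ z : ℂ, f z 2 = 0) ∧ (∀ z : ℂ, (f z 0, f z 1) ∈ D) := by
  obtain ⟨hC2, _, hharm⟩ := hf
  have hcomp : ∀ j : Fin 3, ContDiff ℝ 2 (fun z => f z j) := fun j =>
    (EuclideanSpace.proj (𝕜 := ℝ) j).contDiff.comp hC2
  have hch := component_harmonic f hC2 hharm
  -- the third component is constant
  have c2 : ∀ z w : ℂ, f z 2 = f w 2 :=
    const_of_bounded_harmonic (fun z => f z 2) (hcomp 2) (hch 2) 1
      (fun z => (hrange z).1.le)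
  by_cases h0 : f 0 2 = 0
  · have hz2 : ∀ z : ℂ, f z 2 = 0 := fun z => (c2 z 0).trans h0
    exact ⟨hz2, fun z => (hrange z).2.2 (hz2 z)⟩
  · exfalso
    have habs : 0 < |f 0 2| := abs_pos.mpr h0
    have hbd : ∀ j : Fin 3, (j = 0 ∨ j = 1) → ∀ z : ℂ, |f z j| ≤ 1 / |f 0 2| := by
      intro j hj z
      have hr := (hrange z).2.1
      rw [c2 z 0] at hr
      have hsq : (f z j) ^ 2 * (f 0 2) ^ 2 < 1 := by
        rcases hj with rfl | rfl
        · nlinarith [sq_nonneg (f z 1)]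
        · nlinarith [sq_nonneg (f z 0)]
      have h2 : |f z j| * |f 0 2| < 1 := by
        nlinarith [abs_nonneg (f z j), abs_nonneg (f 0 2), _root_.sq_abs (f z j), _root_.sq_abs (f 0 2),
          mul_nonneg (abs_nonneg (f z j)) (abs_nonneg (f 0 2))]
      rw [le_div_iff₀ habs]
      exact h2.le
    have c0 : ∀ z w : ℂ, f z 0 = f w 0 :=
      const_of_bounded_harmonic (fun z => f z 0) (hcomp 0) (hch 0) (1 / |f 0 2|)
        (hbd 0 (Or.inl rfl))
    have c1 : ∀ z w : ℂ, f z 1 = f w 1 :=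
      const_of_bounded_harmonic (fun z => f z 1) (hcomp 1) (hch 1) (1 / |f 0 2|)
        (hbd 1 (Or.inr rfl))
    obtain ⟨z, w, hzw⟩ := hnc
    apply hzw
    ext i
    fin_cases i
    · exact c0 z w
    · exact c1 z w
    · exact c2 z w
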